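/- For every s ∈ (0,1], the distance in the Siegel domain model of the quaternionic hyperbolic n-space between the horospheres ∂H_1 and ∂H_s (boundaries of the horoballs H_t = {(w_0,w) : tr w_0 - n(w) ≥ t}) equals -(ln s)/2. -/

import Mathlib

noncomputable section

open Quaternion

variable (n : ℕ)

/-- The height `tr w₀ - n(w)` of a point of `ℍ × ℍ^{n-1}`. -/
def siegelHeight (p : Quaternion ℝ × (Fin (n - 1) → Quaternion ℝ)) : ℝ :=
  2 * p.1.re - ∑ i, normSq (p.2 i)

/-- The Siegel domain `{(w₀,w) ∈ ℍ × ℍ^{n-1} : tr w₀ - n(w) > 0}`. -/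
def SiegelDomain : Set (Quaternion ℝ × (Fin (n - 1) → Quaternion ℝ)) :=
  {p | 0 < siegelHeight n p}

/-- The horosphere `∂H_s = {(w₀,w) : tr w₀ - n(w) = s}`, the boundary of the horoball
`H_s = {(w₀,w) : tr w₀ - n(w) ≥ s}` centred at `∞`. -/
def horoSphere (s : ℝ) : Set (Quaternion ℝ × (Fin (n - 1) → Quaternion ℝ)) :=
  {p | siegelHeight n p = s}

/-- The speed at time `t` of a path `γ` with derivative `γ'`, for the Riemannian metric
`ds² = (tr w₀ - n(w))⁻² ( n(dw₀ - conj(dw)·w) + (tr w₀ - n(w)) n(dw) )`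
of the Siegel domain model of the quaternionic hyperbolic `n`-space. -/
def siegelSpeed (γ γ' : ℝ → Quaternion ℝ × (Fin (n - 1) → Quaternion ℝ)) (t : ℝ) : ℝ :=
  (1 / siegelHeight n (γ t)) *
    Real.sqrt (normSq ((γ' t).1 - ∑ i, star ((γ' t).2 i) * (γ t).2 i)
      + siegelHeight n (γ t) * ∑ i, normSq ((γ' t).2 i))

/-- The Riemannian length of a `C¹` path in the Siegel domain. -/
def siegelLength (γ γ' : ℝ → Quaternion ℝ × (Fin (n - 1) → Quaternion ℝ)) : ℝ :=
  ∫ t in (0 : ℝ)..1, siegelSpeed n γ γ' t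

/-!  Auxiliary material for the proof. -/

open scoped RealInnerProductSpace

section Witness

variable (s : ℝ)

/-- The vertical witness path `t ↦ (exp(t log s)/2, 0)`. -/
def wγ : ℝ → Quaternion ℝ × (Fin (n - 1) → Quaternion ℝ) :=
  fun t => (((Real.exp (t * Real.log s) / 2 : ℝ) : Quaternion ℝ), 0)

/-- The derivative of the vertical witness path. -/
def wγ' : ℝ → Quaternion ℝ × (Fin (n - 1) → Quaternion ℝ) :=
  fun t => (((Real.log s * Real.exp (t * Real.log s) / 2 : ℝ) : Quaternion ℝ), 0)

lemma wγ_hasDeriv (t : ℝ) : HasDerivAt (wγ n s) (wγ' n s t) t := by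
  have h1 : HasDerivAt (fun u : ℝ => Real.exp (u * Real.log s) / 2)
      (Real.log s * Real.exp (t * Real.log s) / 2) t := by
    have h0 : HasDerivAt (fun u : ℝ => u * Real.log s) (Real.log s) t := by
      simpa using (hasDerivAt_id t).mul_const (Real.log s)
    have := ((Real.hasDerivAt_exp (t * Real.log s)).comp t h0).div_const 2
    exact this.congr_deriv (by ring)
  have h2 : HasDerivAt (fun u : ℝ => ((Real.exp (u * Real.log s) / 2 : ℝ) : Quaternion ℝ))
      (((Real.log s * Real.exp (t * Real.log s) / 2 : ℝ) : Quaternion ℝ)) t := by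
    have := h1.smul_const (1 : Quaternion ℝ)
    simpa only [← Quaternion.coe_one, Quaternion.smul_coe, mul_one] using this
  exact h2.prodMk (hasDerivAt_const t 0)

lemma wγ_height (t : ℝ) : siegelHeight n (wγ n s t) = Real.exp (t * Real.log s) := by
  simp only [siegelHeight, wγ, Quaternion.re_coe, Pi.zero_apply, map_zero, Finset.sum_const_zero]
  ring

lemma wγ_speed (hs0 : 0 < s) (hs1 : s ≤ 1) (t : ℝ) :
    siegelSpeed n (wγ n s) (wγ' n s) t = -(Real.log s) / 2 := by
  have hls : Real.log s ≤ 0 := Real.log_nonpos hs0.le hs1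
  have he : (0:ℝ) < Real.exp (t * Real.log s) := Real.exp_pos _
  rw [siegelSpeed, wγ_height]
  simp only [wγ, wγ']
  simp only [Pi.zero_apply, star_zero, zero_mul, Finset.sum_const_zero, sub_zero, map_zero,
    mul_zero, add_zero, Quaternion.normSq_coe]
  rw [Real.sqrt_sq_eq_abs, abs_div, abs_mul, abs_of_pos he, abs_of_nonpos hls]
  field_simp
  ring

end Witness

lemma quat_re_sum {ι : Type*} (s : Finset ι) (f : ι → Quaternion ℝ) :
    (∑ i ∈ s, f i).re = ∑ i ∈ s, (f i).re :=
  map_sum (QuaternionAlgebra.reₗ (-1 : ℝ) (0 : ℝ) (-1 : ℝ)) f s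

lemma quat_inner_one (q : Quaternion ℝ) : ⟪q, (1 : Quaternion ℝ)⟫ = q.re := by
  rw [Quaternion.inner_def]; simp

lemma quat_inner_pair (a b : Quaternion ℝ) :
    ⟪a, b⟫ + ⟪b, a⟫ = 2 * (star b * a).re := by
  rw [Quaternion.inner_def, Quaternion.inner_def]
  have h1 : (star b * a).re = (a * star b).re := by simp [Quaternion.re_mul]; ring
  have h2 : (b * star a).re = (a * star b).re := by
    rw [show b * star a = star (a * star b) by simp [star_mul], Quaternion.re_star]
  rw [h1, h2]; ring

lemma quat_re_sq_le (a : Quaternion ℝ) : (a.re)^2 ≤ normSq a := by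
  rw [Quaternion.normSq_def']
  nlinarith [sq_nonneg a.imI, sq_nonneg a.imJ, sq_nonneg a.imK]

/-- The key lower bound: every admissible path from `∂H₁` to `∂H_s` has length
at least `-(log s)/2`. -/
lemma lowerBound (s : ℝ) (hs0 : 0 < s) (hs1 : s ≤ 1)
    (γ γ' : ℝ → Quaternion ℝ × (Fin (n - 1) → Quaternion ℝ))
    (hd : ∀ t ∈ Set.Icc (0:ℝ) 1, HasDerivAt γ (γ' t) t)
    (hc' : ContinuousOn γ' (Set.Icc (0:ℝ) 1))
    (hdom : ∀ t ∈ Set.Icc (0:ℝ) 1, 0 < siegelHeight n (γ t))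
    (he0 : siegelHeight n (γ 0) = 1) (he1 : siegelHeight n (γ 1) = s) :
    -(Real.log s) / 2 ≤ siegelLength n γ γ' := by
  classical
  set A : ℝ → Quaternion ℝ :=
    fun t => (γ' t).1 - ∑ i, star ((γ' t).2 i) * (γ t).2 i with hA
  have hγc : ContinuousOn γ (Set.Icc 0 1) := fun t ht =>
    (hd t ht).continuousAt.continuousWithinAt
  have hSH : Continuous (siegelHeight n) := by
    unfold siegelHeight
    exact (continuous_const.mul (Quaternion.continuous_re.comp continuous_fst)).sub
      (continuous_finset_sum _ fun i _ => Quaternion.continuous_normSq.comp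
        ((continuous_apply i).comp continuous_snd))
  have hhc : ContinuousOn (fun t => siegelHeight n (γ t)) (Set.Icc 0 1) :=
    hSH.comp_continuousOn hγc
  have hcomp2 : ∀ i : Fin (n-1), ContinuousOn (fun t => (γ t).2 i) (Set.Icc (0:ℝ) 1) := fun i =>
    ((continuous_apply i).comp continuous_snd).comp_continuousOn hγc
  have hcomp2' : ∀ i : Fin (n-1), ContinuousOn (fun t => (γ' t).2 i) (Set.Icc (0:ℝ) 1) := fun i =>
    ((continuous_apply i).comp continuous_snd).comp_continuousOn hc'
  have hAc : ContinuousOn A (Set.Icc 0 1) := by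
    apply ContinuousOn.sub
    · exact continuous_fst.comp_continuousOn hc'
    · exact continuousOn_finset_sum _ fun i _ => ((hcomp2' i).star).mul (hcomp2 i)
  -- derivative of the height along the path
  have hdh : ∀ t ∈ Set.Icc (0:ℝ) 1,
      HasDerivAt (fun u => siegelHeight n (γ u)) (2 * (A t).re) t := by
    intro t ht
    have hfst : HasDerivAt (fun u => (γ u).1) ((γ' t).1) t :=
      (ContinuousLinearMap.fst ℝ (Quaternion ℝ)
        (Fin (n-1) → Quaternion ℝ)).hasFDerivAt.comp_hasDerivAt t (hd t ht)
    have hsnd : ∀ i : Fin (n-1), HasDerivAt (fun u => (γ u).2 i) ((γ' t).2 i) t := fun i =>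
      ((ContinuousLinearMap.proj i).comp
        (ContinuousLinearMap.snd ℝ (Quaternion ℝ)
          (Fin (n-1) → Quaternion ℝ))).hasFDerivAt.comp_hasDerivAt t (hd t ht)
    have h1 : HasDerivAt (fun u => 2 * ⟪(γ u).1, (1 : Quaternion ℝ)⟫)
        (2 * (⟪(γ t).1, (0 : Quaternion ℝ)⟫ + ⟪(γ' t).1, (1 : Quaternion ℝ)⟫)) t :=
      (hfst.inner ℝ (hasDerivAt_const t (1 : Quaternion ℝ))).const_mul 2
    have h2 : HasDerivAt (fun u => ∑ i, ⟪(γ u).2 i, (γ u).2 i⟫)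
        (∑ i, (⟪(γ t).2 i, (γ' t).2 i⟫ + ⟪(γ' t).2 i, (γ t).2 i⟫)) t :=
      HasDerivAt.fun_sum fun i _ => (hsnd i).inner ℝ (hsnd i)
    have h3 := h1.fun_sub h2
    have hfun : (fun u => 2 * ⟪(γ u).1, (1 : Quaternion ℝ)⟫ - ∑ i, ⟪(γ u).2 i, (γ u).2 i⟫)
        = fun u => siegelHeight n (γ u) := by
      funext u
      simp only [quat_inner_one, Quaternion.inner_self, siegelHeight]
    rw [hfun] at h3
    refine h3.congr_deriv ?_
    simp only [quat_inner_pair, inner_zero_right, zero_add, quat_inner_one, hA,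
      Quaternion.re_sub, quat_re_sum]
    rw [mul_sub, Finset.mul_sum]
  -- derivative of the comparison function
  have hφ : ∀ t ∈ Set.Icc (0:ℝ) 1,
      HasDerivAt (fun u => -(Real.log (siegelHeight n (γ u))) / 2)
        (-(2 * (A t).re) / (2 * siegelHeight n (γ t))) t := by
    intro t ht
    have hlog := ((Real.hasDerivAt_log (hdom t ht).ne').comp t (hdh t ht)).neg.div_const 2
    exact hlog.congr_deriv (by ring)
  -- pointwise comparison
  have hineq : ∀ t ∈ Set.Icc (0:ℝ) 1,
      -(2 * (A t).re) / (2 * siegelHeight n (γ t)) ≤ siegelSpeed n γ γ' t := by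
    intro t ht
    have hht := hdom t ht
    have hsum : (0:ℝ) ≤ ∑ i, normSq ((γ' t).2 i) :=
      Finset.sum_nonneg fun i _ => normSq_nonneg
    have h3 : -(A t).re ≤ Real.sqrt (normSq (A t)
        + siegelHeight n (γ t) * ∑ i, normSq ((γ' t).2 i)) := by
      calc -(A t).re ≤ |(A t).re| := neg_le_abs _
        _ ≤ Real.sqrt (normSq (A t)) := Real.abs_le_sqrt (quat_re_sq_le _)
        _ ≤ _ := Real.sqrt_le_sqrt (by nlinarith)
    rw [siegelSpeed]
    have key : -(2 * (A t).re) / (2 * siegelHeight n (γ t))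
        = (1 / siegelHeight n (γ t)) * (-(A t).re) := by
      field_simp
    rw [key]
    exact mul_le_mul_of_nonneg_left h3 (by positivity)
  -- integrability
  have hdhc : ContinuousOn (fun t => -(2 * (A t).re) / (2 * siegelHeight n (γ t)))
      (Set.Icc (0:ℝ) 1) := by
    apply ContinuousOn.div
    · exact (continuousOn_const.mul (Quaternion.continuous_re.comp_continuousOn hAc)).neg
    · exact continuousOn_const.mul hhc
    · intro t ht
      have := hdom t ht
      positivity
  have hspeedc : ContinuousOn (siegelSpeed n γ γ') (Set.Icc (0:ℝ) 1) := by
    unfold siegelSpeed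
    apply ContinuousOn.mul
    · exact continuousOn_const.div hhc fun t ht => (hdom t ht).ne'
    · apply Real.continuous_sqrt.comp_continuousOn
      apply ContinuousOn.add
      · exact Quaternion.continuous_normSq.comp_continuousOn hAc
      · exact hhc.mul (continuousOn_finset_sum _ fun i _ =>
          Quaternion.continuous_normSq.comp_continuousOn (hcomp2' i))
  have hint1 : IntervalIntegrable (fun t => -(2 * (A t).re) / (2 * siegelHeight n (γ t)))
      MeasureTheory.volume 0 1 := by
    apply ContinuousOn.intervalIntegrable
    rwa [Set.uIcc_of_le zero_le_one]
  have hint2 : IntervalIntegrable (siegelSpeed n γ γ') MeasureTheory.volume 0 1 := by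
    apply ContinuousOn.intervalIntegrable
    rwa [Set.uIcc_of_le zero_le_one]
  -- fundamental theorem of calculus
  have hfund : (∫ t in (0:ℝ)..1, -(2 * (A t).re) / (2 * siegelHeight n (γ t)))
      = -(Real.log s) / 2 := by
    rw [intervalIntegral.integral_eq_sub_of_hasDerivAt
      (f := fun u => -(Real.log (siegelHeight n (γ u))) / 2)
      (fun t ht => hφ t (by rwa [Set.uIcc_of_le zero_le_one] at ht)) hint1]
    rw [he0, he1, Real.log_one]
    ring
  calc -(Real.log s) / 2
      = ∫ t in (0:ℝ)..1, -(2 * (A t).re) / (2 * siegelHeight n (γ t)) := hfund.symm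
    _ ≤ ∫ t in (0:ℝ)..1, siegelSpeed n γ γ' t :=
        intervalIntegral.integral_mono_on zero_le_one hint1 hint2 hineq
    _ = siegelLength n γ γ' := rfl

/-- For every `s ∈ (0,1]`, the Riemannian distance in the Siegel domain model of the
quaternionic hyperbolic `n`-space between the horospheres `∂H₁` and `∂H_s`, namely the
infimum of the lengths of `C¹` paths in the Siegel domain joining them, is `-(ln s)/2`. -/
theorem dist_between_horospheres (hn : 2 ≤ n) (s : ℝ) (hs0 : 0 < s) (hs1 : s ≤ 1) :
    sInf {L : ℝ | ∃ γ γ' : ℝ → Quaternion ℝ × (Fin (n - 1) → Quaternion ℝ),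
        (∀ t ∈ Set.Icc (0 : ℝ) 1, HasDerivAt γ (γ' t) t) ∧
        ContinuousOn γ' (Set.Icc (0 : ℝ) 1) ∧
        (∀ t ∈ Set.Icc (0 : ℝ) 1, γ t ∈ SiegelDomain n) ∧
        γ 0 ∈ horoSphere n 1 ∧ γ 1 ∈ horoSphere n s ∧
        L = siegelLength n γ γ'}
      = -(Real.log s) / 2 := by
  have hmem : -(Real.log s) / 2 ∈ {L : ℝ | ∃ γ γ' : ℝ → Quaternion ℝ × (Fin (n - 1) → Quaternion ℝ),
      (∀ t ∈ Set.Icc (0 : ℝ) 1, HasDerivAt γ (γ' t) t) ∧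
      ContinuousOn γ' (Set.Icc (0 : ℝ) 1) ∧
      (∀ t ∈ Set.Icc (0 : ℝ) 1, γ t ∈ SiegelDomain n) ∧
      γ 0 ∈ horoSphere n 1 ∧ γ 1 ∈ horoSphere n s ∧
      L = siegelLength n γ γ'} := by
    refine ⟨wγ n s, wγ' n s, fun t _ => wγ_hasDeriv n s t, ?_, ?_, ?_, ?_, ?_⟩
    · have : Continuous (wγ' n s) := by
        apply Continuous.prodMk
        · exact Quaternion.continuous_coe.comp
            ((continuous_const.mul ((continuous_id.mul continuous_const).rexp)).div_const 2)
        · exact continuous_const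
      exact this.continuousOn
    · intro t _
      show 0 < siegelHeight n (wγ n s t)
      rw [wγ_height]
      exact Real.exp_pos _
    · show siegelHeight n (wγ n s 0) = 1
      rw [wγ_height]
      simp
    · show siegelHeight n (wγ n s 1) = s
      rw [wγ_height]
      rw [one_mul, Real.exp_log hs0]
    · rw [siegelLength,
        intervalIntegral.integral_congr (g := fun _ => -(Real.log s) / 2)
          (fun t _ => wγ_speed n s hs0 hs1 t)]
      simp
  refine le_antisymm (csInf_le ⟨-(Real.log s) / 2, ?_⟩ hmem) (le_csInf ⟨_, hmem⟩ ?_) <;>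
  · rintro L ⟨γ, γ', hd, hc', hdom, h0, h1, rfl⟩
    exact lowerBound n s hs0 hs1 γ γ' hd hc' (fun t ht => hdom t ht) h0 h1
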